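/- Let H be a separable complex Hilbert space, (m_j)_{j=1}^∞ a sequence of scalars, and (x_j)_{j=1}^∞, (f_j)_{j=1}^∞ sequences in H such that the series Σ_{j=1}^∞ ε_j m_j ⟨x, f_j⟩ x_j converges for every x ∈ H and every sequence of scalars (ε_j)_{j=1}^∞ with |ε_j| = 1. Then there exists a constant C > 0 such that for all m ≤ n in ℕ, all x ∈ H, and all scalars ε_m,...,ε_n with |ε_j| = 1, one has ‖Σ_{j=m}^n ε_j m_j ⟨x, f_j⟩ x_j‖ ≤ C‖x‖. -/

import Mathlib

open scoped ComplexInnerProductSpace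
open Filter Finset

open scoped ComplexInnerProductSpace
open Filter Finset

lemma indCauchy {H : Type*} [NormedAddCommGroup H] [NormedSpace ℂ H] (b : ℕ → H)
    (hconv : ∀ (ε : ℕ → ℂ), (∀ j, ‖ε j‖ = 1) →
      ∃ y : H, Tendsto (fun n => ∑ j ∈ Finset.range n, ε j • b j) atTop (nhds y))
    (P : ℕ → Prop) [DecidablePred P] :
    CauchySeq (fun n => ∑ j ∈ Finset.range n, (if P j then (1:ℂ) else 0) • b j) := by
  obtain ⟨y1, h1⟩ := hconv (fun _ => 1) (fun _ => norm_one)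
  obtain ⟨y2, h2⟩ := hconv (fun j => if P j then 1 else -1) (by
    intro j; split <;> simp)
  have hEq : (fun n => ∑ j ∈ Finset.range n, (if P j then (1:ℂ) else 0) • b j)
      = fun n => (2⁻¹ : ℂ) • ((∑ j ∈ Finset.range n, (1:ℂ) • b j)
          + ∑ j ∈ Finset.range n, (if P j then (1:ℂ) else -1) • b j) := by
    funext n
    rw [← Finset.sum_add_distrib, Finset.smul_sum]
    refine Finset.sum_congr rfl fun j _ => ?_
    split <;> module
  rw [hEq]
  exact (((h1.add h2).const_smul ((2:ℂ)⁻¹)).cauchySeq)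

lemma existsFinsetBound {H : Type*} [NormedAddCommGroup H] [NormedSpace ℂ H] (b : ℕ → H)
    (hconv : ∀ (ε : ℕ → ℂ), (∀ j, ‖ε j‖ = 1) →
      ∃ y : H, Tendsto (fun n => ∑ j ∈ Finset.range n, ε j • b j) atTop (nhds y)) :
    ∃ s : Finset ℕ, ∀ t : Finset ℕ, Disjoint t s → ‖∑ j ∈ t, b j‖ ≤ 1 := by
  classical
  by_contra hc
  push_neg at hc
  choose t ht hn using hc
  set B : ℕ → ℕ := fun k => Nat.rec 0 (fun _ Bk => max Bk ((t (Finset.range Bk)).sup id + 1)) k with hB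
  set blk : ℕ → Finset ℕ := fun k => t (Finset.range (B k)) with hblk
  have hBsucc : ∀ k, B (k+1) = max (B k) ((blk k).sup id + 1) := fun k => rfl
  have hlow : ∀ k, ∀ j ∈ blk k, B k ≤ j := by
    intro k j hj
    by_contra h
    exact (Finset.disjoint_left.mp (ht (Finset.range (B k)))) hj
      (Finset.mem_range.mpr (Nat.lt_of_not_le h))
  have hhigh : ∀ k, ∀ j ∈ blk k, j < B (k+1) := by
    intro k j hj
    have : j ≤ (blk k).sup id := Finset.le_sup (f := id) hj
    have : j < (blk k).sup id + 1 := Nat.lt_succ_of_le this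
    rw [hBsucc k]; exact lt_of_lt_of_le this (le_max_right _ _)
  have hmono : Monotone B := monotone_nat_of_le_succ (fun k => by
    rw [hBsucc k]; exact le_max_left _ _)
  have hne : ∀ k, (blk k).Nonempty := by
    intro k
    rcases Finset.eq_empty_or_nonempty (blk k) with h | h
    · exfalso
      have h2 := hn (Finset.range (B k))
      have h3 : t (Finset.range (B k)) = ∅ := h
      rw [h3] at h2
      simp at h2
      exact absurd h2 (by norm_num)
    · exact h
  have hgrow : ∀ k, k ≤ B k := by
    intro k
    induction k with
    | zero => exact Nat.zero_le _
    | succ k ih =>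
      obtain ⟨j, hj⟩ := hne k
      have h1 : B k ≤ j := hlow k j hj
      have h2 : j ≤ (blk k).sup id := Finset.le_sup (f := id) hj
      have : B k + 1 ≤ B (k+1) := by
        rw [hBsucc k]
        exact le_trans (by omega) (le_max_right _ _)
      omega
  set P : ℕ → Prop := fun j => ∃ k, j ∈ blk k with hP
  have hC := indCauchy b hconv P
  obtain ⟨N, hN⟩ := Metric.cauchySeq_iff.mp hC 1 one_pos
  have h1 := hN (B (N+1)) (le_trans (Nat.le_succ N) (hgrow (N+1))) (B N) (hgrow N)
  rw [dist_eq_norm, ← Finset.sum_Ico_eq_sub _ (hmono (Nat.le_succ N))] at h1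
  have hsum : ∑ j ∈ Finset.Ico (B N) (B (N+1)), (if P j then (1:ℂ) else 0) • b j
      = ∑ j ∈ blk N, b j := by
    rw [← Finset.sum_subset (s₁ := blk N)]
    · exact Finset.sum_congr rfl fun j hj => by
        rw [if_pos ⟨N, hj⟩, one_smul]
    · intro j hj; exact Finset.mem_Ico.mpr ⟨hlow N j hj, hhigh N j hj⟩
    · intro j hj hjn
      rw [if_neg, zero_smul]
      rintro ⟨l, hl⟩
      rcases lt_trichotomy l N with h | h | h
      · have : j < B (l+1) := hhigh l j hl
        have : B (l+1) ≤ B N := hmono h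
        have := (Finset.mem_Ico.mp hj).1
        omega
      · exact hjn (h ▸ hl)
      · have : B (N+1) ≤ B l := hmono h
        have : B l ≤ j := hlow l j hl
        have := (Finset.mem_Ico.mp hj).2
        omega
  rw [hsum] at h1
  exact absurd h1 (not_lt.mpr (le_of_lt (hn (Finset.range (B N)))))


lemma pointwiseBound {H : Type*} [NormedAddCommGroup H] [InnerProductSpace ℂ H] (b : ℕ → H)
    (hbd : ∃ s : Finset ℕ, ∀ t : Finset ℕ, Disjoint t s → ‖∑ j ∈ t, b j‖ ≤ 1) :
    ∃ M : ℝ, ∀ (F : Finset ℕ) (ε : ℕ → ℂ), (∀ j, ‖ε j‖ ≤ 1) →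
      ‖∑ j ∈ F, ε j • b j‖ ≤ M := by
  classical
  obtain ⟨s, hs⟩ := hbd
  set M0 : ℝ := (∑ j ∈ s, ‖b j‖) + 1 with hM0
  have hM0pos : 0 < M0 := by positivity
  have hsub : ∀ G : Finset ℕ, ‖∑ j ∈ G, b j‖ ≤ M0 := by
    intro G
    have hsplit : ∑ j ∈ G, b j = (∑ j ∈ G ∩ s, b j) + ∑ j ∈ G \ s, b j :=
      (Finset.sum_inter_add_sum_sdiff G s b).symm
    rw [hsplit]
    refine le_trans (norm_add_le _ _) (add_le_add ?_ ?_)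
    · refine le_trans (norm_sum_le _ _) ?_
      exact Finset.sum_le_sum_of_subset_of_nonneg (Finset.inter_subset_right)
        (fun j _ _ => norm_nonneg _)
    · exact hs _ Finset.sdiff_disjoint
  refine ⟨4 * M0, fun F ε hε => ?_⟩
  set y := ∑ j ∈ F, ε j • b j with hy
  by_cases hy0 : y = 0
  · rw [hy0]; simpa using by positivity
  set w : H := ‖y‖⁻¹ • y with hw
  have hw1 : ‖w‖ = 1 := norm_smul_inv_norm hy0
  have hkey : ∀ G : Finset ℕ, ‖⟪w, ∑ j ∈ G, b j⟫‖ ≤ M0 := by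
    intro G
    refine le_trans (norm_inner_le_norm _ _) ?_
    rw [hw1, one_mul]
    exact hsub G
  have hre : ∀ G : Finset ℕ, |(⟪w, ∑ j ∈ G, b j⟫).re| ≤ M0 := fun G =>
    le_trans (Complex.abs_re_le_norm _) (by exact hkey G)
  have him : ∀ G : Finset ℕ, |(⟪w, ∑ j ∈ G, b j⟫).im| ≤ M0 := fun G =>
    le_trans (Complex.abs_im_le_norm _) (by exact hkey G)
  -- ‖y‖ = re ⟪w, y⟫
  have hwy : ⟪w, y⟫ = (‖y‖ : ℂ) := by
    rw [hw, RCLike.real_smul_eq_coe_smul (K := ℂ), inner_smul_left, inner_self_eq_norm_sq_to_K]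
    push_cast
    have : (‖y‖ : ℂ) ≠ 0 := by
      simpa using norm_ne_zero_iff.mpr hy0
    rw [map_inv₀, RCLike.conj_ofReal]
    field_simp
    rfl
  have step1 : ‖y‖ ≤ ∑ j ∈ F, ‖⟪w, b j⟫‖ := by
    have h1 : ‖y‖ = (⟪w, y⟫).re := by rw [hwy]; simp
    rw [h1, hy, inner_sum, Complex.re_sum]
    refine le_trans (Finset.sum_le_sum (fun j _ => Complex.re_le_norm _)) ?_
    refine Finset.sum_le_sum (fun j _ => ?_)
    rw [inner_smul_right, norm_mul]
    exact le_trans (mul_le_of_le_one_left (norm_nonneg _) (hε j)) le_rfl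
  have step2 : ∑ j ∈ F, ‖⟪w, b j⟫‖ ≤ (∑ j ∈ F, |(⟪w, b j⟫).re|) + ∑ j ∈ F, |(⟪w, b j⟫).im| := by
    rw [← Finset.sum_add_distrib]
    refine Finset.sum_le_sum (fun j _ => ?_)
    exact Complex.norm_le_abs_re_add_abs_im _
  -- real part bound
  have hre_sum : ∑ j ∈ F, |(⟪w, b j⟫).re| ≤ 2 * M0 := by
    rw [← Finset.sum_filter_add_sum_filter_not F (fun j => 0 ≤ (⟪w, b j⟫).re)]
    have e1 : ∑ j ∈ F.filter (fun j => 0 ≤ (⟪w, b j⟫).re), |(⟪w, b j⟫).re|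
        = (⟪w, ∑ j ∈ F.filter (fun j => 0 ≤ (⟪w, b j⟫).re), b j⟫).re := by
      rw [inner_sum, Complex.re_sum]
      exact Finset.sum_congr rfl (fun j hj => abs_of_nonneg (Finset.mem_filter.mp hj).2)
    have e2 : ∑ j ∈ F.filter (fun j => ¬ 0 ≤ (⟪w, b j⟫).re), |(⟪w, b j⟫).re|
        = -(⟪w, ∑ j ∈ F.filter (fun j => ¬ 0 ≤ (⟪w, b j⟫).re), b j⟫).re := by
      rw [inner_sum, Complex.re_sum, ← Finset.sum_neg_distrib]
      exact Finset.sum_congr rfl (fun j hj =>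
        abs_of_neg (lt_of_not_ge (Finset.mem_filter.mp hj).2))
    rw [e1, e2, two_mul]
    exact add_le_add (le_trans (le_abs_self _) (hre _))
      (le_trans (neg_le_abs _) (hre _))
  have him_sum : ∑ j ∈ F, |(⟪w, b j⟫).im| ≤ 2 * M0 := by
    rw [← Finset.sum_filter_add_sum_filter_not F (fun j => 0 ≤ (⟪w, b j⟫).im)]
    have e1 : ∑ j ∈ F.filter (fun j => 0 ≤ (⟪w, b j⟫).im), |(⟪w, b j⟫).im|
        = (⟪w, ∑ j ∈ F.filter (fun j => 0 ≤ (⟪w, b j⟫).im), b j⟫).im := by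
      rw [inner_sum, Complex.im_sum]
      exact Finset.sum_congr rfl (fun j hj => abs_of_nonneg (Finset.mem_filter.mp hj).2)
    have e2 : ∑ j ∈ F.filter (fun j => ¬ 0 ≤ (⟪w, b j⟫).im), |(⟪w, b j⟫).im|
        = -(⟪w, ∑ j ∈ F.filter (fun j => ¬ 0 ≤ (⟪w, b j⟫).im), b j⟫).im := by
      rw [inner_sum, Complex.im_sum, ← Finset.sum_neg_distrib]
      exact Finset.sum_congr rfl (fun j hj =>
        abs_of_neg (lt_of_not_ge (Finset.mem_filter.mp hj).2))
    rw [e1, e2, two_mul]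
    exact add_le_add (le_trans (le_abs_self _) (him _))
      (le_trans (neg_le_abs _) (him _))
  calc ‖y‖ ≤ _ := step1
    _ ≤ _ := step2
    _ ≤ 2 * M0 + 2 * M0 := add_le_add hre_sum him_sum
    _ = 4 * M0 := by ring


noncomputable def rankOneR {H : Type*} [NormedAddCommGroup H] [InnerProductSpace ℂ H]
    (c : ℂ) (g u : H) : H →L[ℝ] H where
  toFun v := (c * ⟪v, g⟫) • u
  map_add' v v' := by rw [inner_add_left, mul_add, add_smul]
  map_smul' r v := by
    simp only [RingHom.id_apply]
    rw [RCLike.real_smul_eq_coe_smul (K := ℂ) r v, inner_smul_left, RCLike.conj_ofReal]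
    module
  cont := by
    exact ((continuous_const.mul ((continuous_id.inner continuous_const))).smul
      continuous_const)

@[simp] lemma rankOneR_apply {H : Type*} [NormedAddCommGroup H] [InnerProductSpace ℂ H]
    (c : ℂ) (g u v : H) : rankOneR c g u v = (c * ⟪v, g⟫) • u := rfl

theorem uniform_bound_of_unconditional_convergence
    {H : Type*} [NormedAddCommGroup H] [InnerProductSpace ℂ H]
    [CompleteSpace H] [TopologicalSpace.SeparableSpace H]
    (m : ℕ → ℂ) (x f : ℕ → H)
    (hconv : ∀ (v : H) (ε : ℕ → ℂ), (∀ j, ‖ε j‖ = 1) →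
      ∃ y : H, Filter.Tendsto
        (fun n => ∑ j ∈ Finset.range n, (ε j * m j * ⟪v, f j⟫) • x j)
        Filter.atTop (nhds y)) :
    ∃ C : ℝ, 0 < C ∧ ∀ (k n : ℕ), k ≤ n → ∀ (v : H) (ε : ℕ → ℂ),
      (∀ j ∈ Finset.Icc k n, ‖ε j‖ = 1) →
      ‖∑ j ∈ Finset.Icc k n, (ε j * m j * ⟪v, f j⟫) • x j‖ ≤ C * ‖v‖ := by
  classical
  set T : (Finset ℕ × {ε : ℕ → ℂ // ∀ j, ‖ε j‖ ≤ 1}) → H →L[ℝ] H :=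
    fun p => ∑ j ∈ p.1, rankOneR ((p.2 : ℕ → ℂ) j * m j) (f j) (x j) with hT
  have hTapp : ∀ p v, T p v = ∑ j ∈ p.1, ((p.2 : ℕ → ℂ) j * m j * ⟪v, f j⟫) • x j := by
    intro p v
    rw [hT]
    simp only [ContinuousLinearMap.sum_apply, rankOneR_apply, mul_assoc]
  have hpt : ∀ v : H, ∃ C : ℝ, ∀ p, ‖T p v‖ ≤ C := by
    intro v
    set b : ℕ → H := fun j => (m j * ⟪v, f j⟫) • x j with hb
    have hconv' : ∀ (ε : ℕ → ℂ), (∀ j, ‖ε j‖ = 1) →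
        ∃ y : H, Tendsto (fun n => ∑ j ∈ Finset.range n, ε j • b j) atTop (nhds y) := by
      intro ε hε
      obtain ⟨y, hy⟩ := hconv v ε hε
      refine ⟨y, ?_⟩
      convert hy using 2 with n
      refine Finset.sum_congr rfl fun j _ => ?_
      rw [hb, smul_smul, mul_assoc]
    obtain ⟨M, hM⟩ := pointwiseBound b (existsFinsetBound b hconv')
    refine ⟨M, fun p => ?_⟩
    have : T p v = ∑ j ∈ p.1, (p.2 : ℕ → ℂ) j • b j := by
      rw [hTapp]
      refine Finset.sum_congr rfl fun j _ => ?_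
      rw [hb, smul_smul, mul_assoc]
    rw [this]
    exact hM p.1 _ p.2.2
  obtain ⟨C', hC'⟩ := banach_steinhaus hpt
  refine ⟨max C' 1, lt_of_lt_of_le one_pos (le_max_right _ _), ?_⟩
  intro k n hkn v ε hε
  set ε' : ℕ → ℂ := fun j => if j ∈ Finset.Icc k n then ε j else 1 with hε'def
  have hε'le : ∀ j, ‖ε' j‖ ≤ 1 := by
    intro j
    rw [hε'def]
    dsimp only
    split
    · exact le_of_eq (hε j ‹_›)
    · simp
  set p : Finset ℕ × {ε : ℕ → ℂ // ∀ j, ‖ε j‖ ≤ 1} := (Finset.Icc k n, ⟨ε', hε'le⟩)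
  have hsum : ∑ j ∈ Finset.Icc k n, (ε j * m j * ⟪v, f j⟫) • x j = T p v := by
    rw [hTapp]
    refine Finset.sum_congr rfl fun j hj => ?_
    have h2 : (p.2 : ℕ → ℂ) j = ε j := by
      show ε' j = ε j
      rw [hε'def]
      dsimp only
      rw [if_pos (show j ∈ Finset.Icc k n from hj)]
    rw [h2]
  rw [hsum]
  calc ‖T p v‖ ≤ ‖T p‖ * ‖v‖ := (T p).le_opNorm v
    _ ≤ C' * ‖v‖ := mul_le_mul_of_nonneg_right (hC' p) (norm_nonneg v)
    _ ≤ max C' 1 * ‖v‖ := mul_le_mul_of_nonneg_right (le_max_left _ _) (norm_nonneg v)
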